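/- Let n ≥ 1, let p : Fin n → ℝ, and let σ be a permutation of Fin n that sorts p in nonincreasing order, i.e., p(σ k) ≥ p(σ k′) whenever k ≤ k′. Let w : Fin n → ℝ satisfy: for every index i with i + 1 < n, w i = 0 if p(σ i) = p(σ (i+1)), and w i > 0 if p(σ i) > p(σ (i+1)). Define g : Fin n → ℝ by g j = Σ_{k ≥ σ⁻¹ j} w k (that is, g = S(p)⁻¹ U w where U is the upper-triangular matrix of ones and S(p) the sorting permutation). Then g is order-preserving for p: for all i, j ∈ Fin n, p i ≥ p j if and only if g i ≥ g j. -/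

import Mathlib

open Finset

/-- Sufficiency of the order-preserving calibrator construction of Rahimi et al.:
if `σ` sorts `p` in nonincreasing order and the weights `w` vanish exactly on ties and are
positive on strict descents, then `g j = Σ_{k ≥ σ⁻¹ j} w k` (i.e. `g = S(p)⁻¹ U w`) is
order-preserving for `p`. -/
theorem orderPreserving_of_upper_triangular_weights (n : ℕ) (hn : 1 ≤ n)
    (p : Fin n → ℝ) (σ : Equiv.Perm (Fin n))
    (hsort : ∀ k k' : Fin n, k ≤ k' → p (σ k') ≤ p (σ k))
    (w : Fin n → ℝ)
    (hw0 : ∀ (i : Fin n) (h : (i : ℕ) + 1 < n),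
      p (σ i) = p (σ ⟨(i : ℕ) + 1, h⟩) → w i = 0)
    (hwpos : ∀ (i : Fin n) (h : (i : ℕ) + 1 < n),
      p (σ ⟨(i : ℕ) + 1, h⟩) < p (σ i) → 0 < w i)
    (g : Fin n → ℝ)
    (hg : ∀ j : Fin n, g j = ∑ k ∈ Finset.Ici (σ.symm j), w k) :
    ∀ i j : Fin n, p j ≤ p i ↔ g j ≤ g i := by
  -- weights are nonnegative (on all indices with a successor)
  have hwnn : ∀ k : Fin n, (k : ℕ) + 1 < n → 0 ≤ w k := by
    intro k hk
    have hle : k ≤ (⟨(k : ℕ) + 1, hk⟩ : Fin n) := by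
      simp [Fin.le_def]
    rcases lt_or_eq_of_le (hsort k ⟨(k : ℕ) + 1, hk⟩ hle) with h | h
    · exact le_of_lt (hwpos k hk h)
    · exact le_of_eq (hw0 k hk h.symm).symm
  have hIco_succ : ∀ (a b k : Fin n), k ∈ Finset.Ico a b → (k : ℕ) + 1 < n := by
    intro a b k hk
    rw [Finset.mem_Ico] at hk
    have h2 := hk.2
    rw [Fin.lt_def] at h2
    have := b.isLt
    omega
  have hsum_nn : ∀ a b : Fin n, 0 ≤ ∑ k ∈ Finset.Ico a b, w k := by
    intro a b
    exact Finset.sum_nonneg fun k hk => hwnn k (hIco_succ a b k hk)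
  -- ties force zero weights on the interval
  have hzero : ∀ a b : Fin n, a ≤ b → p (σ a) = p (σ b) →
      ∀ k ∈ Finset.Ico a b, w k = 0 := by
    intro a b hab hpe k hk
    have hk1 : (k : ℕ) + 1 < n := hIco_succ a b k hk
    rw [Finset.mem_Ico] at hk
    have hka : a ≤ k := hk.1
    have hkb : k < b := hk.2
    have hkb' : (⟨(k : ℕ) + 1, hk1⟩ : Fin n) ≤ b := by
      rw [Fin.le_def]; rw [Fin.lt_def] at hkb; simpa using hkb
    have h1 : p (σ k) ≤ p (σ a) := hsort a k hka
    have h2 : p (σ b) ≤ p (σ ⟨(k : ℕ) + 1, hk1⟩) := hsort _ b hkb'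
    have h3 : p (σ ⟨(k : ℕ) + 1, hk1⟩) ≤ p (σ k) := by
      apply hsort
      rw [Fin.le_def]; simp
    exact hw0 k hk1 (by linarith)
  -- zero weights on the interval force a tie, by chaining
  have hchain : ∀ (m : ℕ) (a b : Fin n) (hm : (a : ℕ) + m ≤ (b : ℕ)),
      (∀ k ∈ Finset.Ico a b, w k = 0) →
      p (σ ⟨(a : ℕ) + m, by have := b.isLt; omega⟩) = p (σ a) := by
    intro m
    induction m with
    | zero =>
      intro a b hm _
      have h0 : (⟨(a : ℕ) + 0, by have := b.isLt; omega⟩ : Fin n) = a := Fin.ext (by simp)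
      rw [h0]
    | succ m ih =>
      intro a b hm hz
      have hm' : (a : ℕ) + m ≤ (b : ℕ) := by omega
      have hklt : (a : ℕ) + m < n := by have := b.isLt; omega
      have hk1 : (a : ℕ) + m + 1 < n := by have := b.isLt; omega
      set k : Fin n := ⟨(a : ℕ) + m, hklt⟩ with hkdef
      have hkmem : k ∈ Finset.Ico a b := by
        rw [Finset.mem_Ico, Fin.le_def, Fin.lt_def]
        refine ⟨?_, ?_⟩
        · show (a : ℕ) ≤ (a : ℕ) + m
          omega
        · show (a : ℕ) + m < (b : ℕ)
          omega
      have hwk : w k = 0 := hz k hkmem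
      have hle : k ≤ (⟨(k : ℕ) + 1, by simpa [hkdef] using hk1⟩ : Fin n) := by
        rw [Fin.le_def]; simp
      have heq : p (σ ⟨(k : ℕ) + 1, by simpa [hkdef] using hk1⟩) = p (σ k) := by
        rcases lt_or_eq_of_le (hsort k _ hle) with h | h
        · exact absurd hwk (ne_of_gt (hwpos k (by simpa [hkdef] using hk1) h))
        · exact h
      have : p (σ ⟨(a : ℕ) + (m + 1), by have := b.isLt; omega⟩) = p (σ k) := by
        convert heq using 3
        exact Fin.ext rfl
      rw [this, hkdef]
      exact ih a b hm' hz
  -- the key equivalence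
  have hkey : ∀ a b : Fin n, a ≤ b →
      ((∑ k ∈ Finset.Ico a b, w k) = 0 ↔ p (σ a) = p (σ b)) := by
    intro a b hab
    constructor
    · intro hs
      have hz : ∀ k ∈ Finset.Ico a b, w k = 0 := by
        rw [Finset.sum_eq_zero_iff_of_nonneg
          (fun k hk => hwnn k (hIco_succ a b k hk))] at hs
        exact hs
      have hm : (a : ℕ) + ((b : ℕ) - (a : ℕ)) ≤ (b : ℕ) := by omega
      have := hchain ((b : ℕ) - (a : ℕ)) a b hm hz
      have hb : (⟨(a : ℕ) + ((b : ℕ) - (a : ℕ)), by have := b.isLt; omega⟩ : Fin n) = b := by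
        apply Fin.ext
        have : (a : ℕ) ≤ (b : ℕ) := hab
        simp; omega
      rw [hb] at this
      exact this.symm
    · intro hpe
      exact Finset.sum_eq_zero (hzero a b hab hpe)
  -- splitting the tail sum
  have hsplit : ∀ a b : Fin n, a ≤ b →
      ∑ k ∈ Finset.Ici a, w k = (∑ k ∈ Finset.Ico a b, w k) + ∑ k ∈ Finset.Ici b, w k := by
    intro a b hab
    have hun : Finset.Ico a b ∪ Finset.Ici b = Finset.Ici a := by
      have hab' : (a : ℕ) ≤ (b : ℕ) := hab
      ext x
      simp only [Finset.mem_union, Finset.mem_Ico, Finset.mem_Ici, Fin.le_def, Fin.lt_def]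
      omega
    rw [← Finset.sum_union (by
      rw [Finset.disjoint_left]
      intro x hx hx'
      rw [Finset.mem_Ico] at hx
      rw [Finset.mem_Ici] at hx'
      exact absurd hx.2 (not_lt.mpr hx')), hun]
  intro i j
  set a := σ.symm i with ha
  set b := σ.symm j with hb
  have hia : σ a = i := σ.apply_symm_apply i
  have hjb : σ b = j := σ.apply_symm_apply j
  rcases le_total a b with hab | hab
  · constructor
    · intro _
      rw [hg i, hg j, ← ha, ← hb, hsplit a b hab]
      linarith [hsum_nn a b]
    · intro _
      rw [← hia, ← hjb]
      exact hsort a b hab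
  · -- b ≤ a : both directions reduce to equalities
    have hple : p i ≤ p j := by rw [← hia, ← hjb]; exact hsort b a hab
    have hgle : g i ≤ g j := by
      rw [hg i, hg j, ← ha, ← hb, hsplit b a hab]
      linarith [hsum_nn b a]
    constructor
    · intro hpj
      have hpe : p (σ b) = p (σ a) := by rw [hia, hjb]; linarith
      have hs : (∑ k ∈ Finset.Ico b a, w k) = 0 := (hkey b a hab).2 hpe
      rw [hg i, hg j, ← ha, ← hb, hsplit b a hab, hs]
      linarith
    · intro hgj
      have hge : g i = g j := le_antisymm hgle hgj
      rw [hg i, hg j, ← ha, ← hb, hsplit b a hab] at hge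
      have hs : (∑ k ∈ Finset.Ico b a, w k) = 0 := by linarith
      have := (hkey b a hab).1 hs
      rw [hia, hjb] at this
      linarith
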